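/- On the board of width m = r+s−1 and infinite length (vertices (x,y) with 0 ≤ x < r+s−1, y ∈ ℤ), there is no {r,s}-leaper path from (0,0) to (0,1). -/

import Mathlib

/-- A single `{r,s}`-leaper move on the board with ranks `0 ≤ x < r+s-1`
and unrestricted (integer) files. -/
def stripStep (r s : ℕ) (p q : ℕ × ℤ) : Prop :=
  p.1 < r + s - 1 ∧ q.1 < r + s - 1 ∧
    ((Nat.dist p.1 q.1 = r ∧ (p.2 - q.2).natAbs = s) ∨
     (Nat.dist p.1 q.1 = s ∧ (p.2 - q.2).natAbs = r))

/-- On the board of width `r+s-1` and infinite length there is no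
`{r,s}`-leaper path from `(0,0)` to `(0,1)`. -/
theorem strip_not_reachable
    (r s : ℕ) (hr : 1 ≤ r) (hrs : r < s) (hgcd : Nat.gcd r s = 1) :
    ¬ Relation.ReflTransGen (stripStep r s) (0, (0 : ℤ)) (0, (1 : ℤ)) := by
  set m := r + s with hm
  have hm3 : 3 ≤ m := by omega
  have hco : Nat.Coprime r m := by
    unfold Nat.Coprime
    rw [hm, add_comm, Nat.gcd_add_self_right]
    exact hgcd
  obtain ⟨t, ht⟩ : ∃ t, r * t % m = 1 :=
    (Nat.exists_mul_mod_eq_one_of_coprime hco (by omega)).imp fun _ h => h.2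
  have htm : r * t ≡ 1 [MOD m] := by
    unfold Nat.ModEq
    rw [ht, Nat.mod_eq_of_lt (by omega)]
  -- position along the Hamiltonian path of the x-coordinate graph
  set P : ℕ → ℕ := fun x => ((x + 1) * t + (m - 1)) % m with hPdef
  have hPlt : ∀ x, P x < m := fun x => Nat.mod_lt _ (by omega)
  have hPub : ∀ x, x ≤ m - 2 → P x ≠ m - 1 := by
    intro x hx hcon
    have h2 : (x + 1) * t + (m - 1) ≡ 0 + (m - 1) [MOD m] := by
      unfold Nat.ModEq
      rw [show ((x+1)*t + (m-1)) % m = P x from rfl, hcon,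
        Nat.mod_eq_of_lt (by omega)]
      omega
    have h3 : (x + 1) * t ≡ 0 [MOD m] := h2.add_right_cancel' _
    have h4 : (x + 1) * t * r ≡ 0 * r [MOD m] := h3.mul_right r
    have h5 : x + 1 ≡ 0 [MOD m] := by
      calc x + 1 = (x + 1) * 1 := by ring
        _ ≡ (x + 1) * (r * t) [MOD m] := (Nat.ModEq.mul_left _ htm).symm
        _ = (x + 1) * t * r := by ring
        _ ≡ 0 * r [MOD m] := h4
        _ = 0 := by ring
    have h6 : m ∣ x + 1 := Nat.modEq_zero_iff_dvd.mp h5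
    have h7 : m ≤ x + 1 := Nat.le_of_dvd (by omega) h6
    omega
  have hstep_r : ∀ x, x + r ≤ m - 2 → P (x + r) = P x + 1 := by
    intro x hx
    have hlt : P x + 1 < m := by
      have h1 := hPub x (by omega)
      have h2 := hPlt x
      omega
    have hmeq : (x + r + 1) * t + (m - 1) ≡ P x + 1 [MOD m] := by
      calc (x + r + 1) * t + (m - 1)
          = ((x + 1) * t + (m - 1)) + r * t := by ring
        _ ≡ ((x + 1) * t + (m - 1)) + 1 [MOD m] := Nat.ModEq.add_left _ htm
        _ ≡ P x + 1 [MOD m] :=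
            Nat.ModEq.add_right 1 (Nat.mod_modEq _ m).symm
    have := hmeq
    unfold Nat.ModEq at this
    rw [Nat.mod_eq_of_lt hlt] at this
    exact this
  have hstep_s : ∀ x, x + s ≤ m - 2 → P x = P (x + s) + 1 := by
    intro x hx
    have hlt : P (x + s) + 1 < m := by
      have h1 := hPub (x + s) (by omega)
      have h2 := hPlt (x + s)
      omega
    have hst : s * t + 1 ≡ 0 [MOD m] := by
      calc s * t + 1 ≡ s * t + r * t [MOD m] :=
            Nat.ModEq.add_left _ htm.symm
        _ = m * t := by rw [hm]; ring
        _ ≡ 0 [MOD m] := Nat.modEq_zero_iff_dvd.mpr ⟨t, rfl⟩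
    have hmeq : P (x + s) + 1 ≡ P x [MOD m] := by
      calc P (x + s) + 1
          ≡ ((x + s + 1) * t + (m - 1)) + 1 [MOD m] :=
            Nat.ModEq.add_right 1 (Nat.mod_modEq _ m)
        _ = ((x + 1) * t + (m - 1)) + (s * t + 1) := by ring
        _ ≡ ((x + 1) * t + (m - 1)) + 0 [MOD m] := Nat.ModEq.add_left _ hst
        _ = (x + 1) * t + (m - 1) := by ring
        _ ≡ P x [MOD m] := (Nat.mod_modEq _ m).symm
    have := hmeq
    unfold Nat.ModEq at this
    rw [Nat.mod_eq_of_lt hlt, Nat.mod_eq_of_lt (hPlt x)] at this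
    exact this.symm
  -- the parity invariant
  set f : ℕ × ℤ → ZMod 2 := fun q =>
    (q.1 : ZMod 2) + (r : ZMod 2) + 1 + (P q.1 : ZMod 2) * (m : ZMod 2)
      + (q.2 : ZMod 2) with hfdef
  have h20 : (2 : ZMod 2) = 0 := rfl
  have hm2 : (m : ZMod 2) = (r : ZMod 2) + (s : ZMod 2) := by
    rw [hm]; push_cast; ring
  have key1 : ∀ (x : ℕ) (y y' : ℤ), x + r ≤ m - 2 → (y - y').natAbs = s →
      f (x, y) = f (x + r, y') := by
    intro x y y' hxr hy
    have hP := hstep_r x hxr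
    have hyc : y - y' = (s : ℤ) ∨ y - y' = -(s : ℤ) := by omega
    show (x : ZMod 2) + (r : ZMod 2) + 1 + (P x : ZMod 2) * (m : ZMod 2) + (y : ZMod 2)
      = ((x + r : ℕ) : ZMod 2) + (r : ZMod 2) + 1
        + (P (x + r) : ZMod 2) * (m : ZMod 2) + (y' : ZMod 2)
    rw [hP]
    push_cast
    rcases hyc with h | h
    · have h2 : (y : ZMod 2) - (y' : ZMod 2) = (s : ZMod 2) := by
        have := congrArg (fun z : ℤ => (z : ZMod 2)) h
        push_cast at this
        exact this
      linear_combination h2 - hm2 - (r : ZMod 2) * h20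
    · have h2 : (y : ZMod 2) - (y' : ZMod 2) = -(s : ZMod 2) := by
        have := congrArg (fun z : ℤ => (z : ZMod 2)) h
        push_cast at this
        exact this
      linear_combination h2 - hm2 - ((r : ZMod 2) + (s : ZMod 2)) * h20
  have key2 : ∀ (x : ℕ) (y y' : ℤ), x + s ≤ m - 2 → (y - y').natAbs = r →
      f (x, y) = f (x + s, y') := by
    intro x y y' hxs hy
    have hP := hstep_s x hxs
    have hyc : y - y' = (r : ℤ) ∨ y - y' = -(r : ℤ) := by omega
    show (x : ZMod 2) + (r : ZMod 2) + 1 + (P x : ZMod 2) * (m : ZMod 2) + (y : ZMod 2)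
      = ((x + s : ℕ) : ZMod 2) + (r : ZMod 2) + 1
        + (P (x + s) : ZMod 2) * (m : ZMod 2) + (y' : ZMod 2)
    rw [hP]
    push_cast
    rcases hyc with h | h
    · have h2 : (y : ZMod 2) - (y' : ZMod 2) = (r : ZMod 2) := by
        have := congrArg (fun z : ℤ => (z : ZMod 2)) h
        push_cast at this
        exact this
      linear_combination h2 + hm2 + (r : ZMod 2) * h20
    · have h2 : (y : ZMod 2) - (y' : ZMod 2) = -(r : ZMod 2) := by
        have := congrArg (fun z : ℤ => (z : ZMod 2)) h
        push_cast at this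
        exact this
      linear_combination h2 + hm2
  have hinv : ∀ a b, stripStep r s a b → f a = f b := by
    rintro ⟨x, y⟩ ⟨x', y'⟩ ⟨hx, hx', hmove⟩
    have hxm : x ≤ m - 2 := by omega
    have hxm' : x' ≤ m - 2 := by omega
    rcases hmove with ⟨hdx, hdy⟩ | ⟨hdx, hdy⟩
    · have hcase : x' = x + r ∨ x = x' + r := by
        simp [Nat.dist] at hdx; omega
      rcases hcase with hc | hc
      · subst hc; exact key1 x y y' (by omega) hdy
      · subst hc
        exact (key1 x' y' y (by omega) (by omega)).symm
    · have hcase : x' = x + s ∨ x = x' + s := by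
        simp [Nat.dist] at hdx; omega
      rcases hcase with hc | hc
      · subst hc; exact key2 x y y' (by omega) hdy
      · subst hc
        exact (key2 x' y' y (by omega) (by omega)).symm
  intro h
  have hall : ∀ a b, Relation.ReflTransGen (stripStep r s) a b → f a = f b := by
    intro a b hab
    induction hab with
    | refl => rfl
    | tail _ hstep ih => exact ih.trans (hinv _ _ hstep)
  have hfinal := hall _ _ h
  have : (0 : ZMod 2) = 1 := by
    simp only [hfdef] at hfinal
    push_cast at hfinal
    linear_combination hfinal
  exact absurd this (by decide)
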